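/- Let F : ℝⁿ → ℝⁿ be monotone and L : ℝ^{Nm} → ℝ^{Nm} a symmetric positive-semidefinite linear map, A ∈ ℝ^{Nm×n}, b ∈ ℝ^{Nm}. Define 𝒜(x, z, λ) = (F(x) + Aᵀλ, Lλ, Lλ + b - Ax - Lz). Then 𝒜 is monotone on ℝⁿ × ℝ^{Nm} × ℝ^{Nm}. -/

import Mathlib

open scoped RealInnerProductSpace
open Matrix

/-- Viewing a plain vector in `Fin q → ℝ` as an element of Euclidean space. -/
def ev {q : ℕ} (v : Fin q → ℝ) : EuclideanSpace ℝ (Fin q) := WithLp.toLp 2 v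

/-- With F monotone, L symmetric PSD, the extended operator
    𝒜(x, z, λ) = (F(x) + Aᵀλ, Lλ, Lλ + b - Ax - Lz) is monotone on
    ℝⁿ × ℝ^{Nm} × ℝ^{Nm} (the inner product on the product space being the sum of
    the componentwise Euclidean inner products). -/
theorem extended_operator_monotone {n q : ℕ}
    (F : EuclideanSpace ℝ (Fin n) → EuclideanSpace ℝ (Fin n))
    (hF : ∀ x y, ⟪F x - F y, x - y⟫ ≥ 0)
    (L : Matrix (Fin q) (Fin q) ℝ) (hLsymm : L.IsSymm) (hLpsd : L.PosSemidef)
    (A : Matrix (Fin q) (Fin n) ℝ) (b : EuclideanSpace ℝ (Fin q)) :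
    ∀ (x x' : EuclideanSpace ℝ (Fin n)) (z z' l l' : EuclideanSpace ℝ (Fin q)),
      ⟪(F x + ev (Aᵀ.mulVec l)) - (F x' + ev (Aᵀ.mulVec l')), x - x'⟫ +
      ⟪ev (L.mulVec l) - ev (L.mulVec l'), z - z'⟫ +
      ⟪(ev (L.mulVec l) + b - ev (A.mulVec x) - ev (L.mulVec z)) -
          (ev (L.mulVec l') + b - ev (A.mulVec x') - ev (L.mulVec z')),
        l - l'⟫ ≥ 0 := by
  intro x x' z z' l l'
  have hd : ∀ {m : ℕ} (v w : EuclideanSpace ℝ (Fin m)),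
      ⟪v, w⟫ = (v : Fin m → ℝ) ⬝ᵥ (w : Fin m → ℝ) := by
    intro m v w
    simp [PiLp.inner_apply, RCLike.inner_apply, dotProduct, mul_comm]
  have hT : ∀ {m k : ℕ} (M : Matrix (Fin m) (Fin k) ℝ)
      (u : EuclideanSpace ℝ (Fin k)) (v : EuclideanSpace ℝ (Fin m)),
      ⟪ev (M.mulVec u), v⟫ = ⟪ev (Mᵀ.mulVec v), u⟫ := by
    intro m k M u v
    rw [hd, hd]
    show (M.mulVec u) ⬝ᵥ (v : Fin m → ℝ) = (Mᵀ.mulVec v) ⬝ᵥ (u : Fin k → ℝ)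
    rw [dotProduct_comm, Matrix.dotProduct_mulVec, ← Matrix.mulVec_transpose]
  have e1 : (F x + ev (Aᵀ.mulVec l)) - (F x' + ev (Aᵀ.mulVec l'))
      = (F x - F x') + ev (Aᵀ.mulVec (l - l')) := by
    rw [Matrix.mulVec_sub]
    show _ = (F x - F x') + (ev (Aᵀ.mulVec l) - ev (Aᵀ.mulVec l'))
    abel
  have e2 : ev (L.mulVec l) - ev (L.mulVec l') = ev (L.mulVec (l - l')) := by
    rw [Matrix.mulVec_sub]; rfl
  have e3 : (ev (L.mulVec l) + b - ev (A.mulVec x) - ev (L.mulVec z)) -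
      (ev (L.mulVec l') + b - ev (A.mulVec x') - ev (L.mulVec z'))
      = ev (L.mulVec (l - l')) - ev (A.mulVec (x - x')) - ev (L.mulVec (z - z')) := by
    rw [Matrix.mulVec_sub, Matrix.mulVec_sub, Matrix.mulVec_sub]
    show _ = (ev (L.mulVec l) - ev (L.mulVec l')) - (ev (A.mulVec x) - ev (A.mulVec x'))
        - (ev (L.mulVec z) - ev (L.mulVec z'))
    abel
  rw [e1, e2, e3, inner_add_left, inner_sub_left, inner_sub_left]
  have c1 : ⟪ev (Aᵀ.mulVec (l - l')), x - x'⟫ = ⟪ev (A.mulVec (x - x')), l - l'⟫ := by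
    rw [hT, Matrix.transpose_transpose]; rfl
  have c2 : ⟪ev (L.mulVec (l - l')), z - z'⟫ = ⟪ev (L.mulVec (z - z')), l - l'⟫ := by
    rw [hT, hLsymm.eq]; rfl
  have hpsd : ⟪ev (L.mulVec (l - l')), l - l'⟫ ≥ 0 := by
    rw [hd]
    show (L.mulVec (l - l')) ⬝ᵥ ((l - l' : EuclideanSpace ℝ (Fin q)) : Fin q → ℝ) ≥ 0
    rw [dotProduct_comm]
    have := hLpsd.dotProduct_mulVec_nonneg ((l - l' : EuclideanSpace ℝ (Fin q)) : Fin q → ℝ)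
    simpa using this
  have hm := hF x x'
  have c3 : ⟪ev (L.mulVec (l - l')) - ev (A.mulVec (x - x')), l - l'⟫
      = ⟪ev (L.mulVec (l - l')), l - l'⟫ - ⟪ev (A.mulVec (x - x')), l - l'⟫ :=
    inner_sub_left _ _ _
  have c4 : ⟪F x - F x', x - x'⟫ = ⟪F x, x - x'⟫ - ⟪F x', x - x'⟫ :=
    inner_sub_left _ _ _
  rw [c3]
  linarith [hm, hpsd, c1, c2, c4]
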